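/- Let G be a graph on n vertices, M a positive semidefinite real symmetric n×n matrix indexed by V(G) with (M)_{ij} x_i x_j ≤ 0 for all nonadjacent distinct i, j, and x ∈ R(M) a vector with all entries nonzero. Then for every independent set S of G, |S|² ≤ (xᵀ M# x) · Σ_{u∈S} (M)_{uu}/x_u². -/

import Mathlib

open Matrix Finset

lemma sym_swap {n : ℕ} {M : Matrix (Fin n) (Fin n) ℝ} (h : Mᵀ = M)
    (a b : Fin n → ℝ) : a ⬝ᵥ M.mulVec b = (M.mulVec a) ⬝ᵥ b := by
  rw [Matrix.dotProduct_mulVec, ← Matrix.mulVec_transpose, h]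

/-- Theorem 3.1(1), inequality: for (M,x) ∈ 𝒫(G) and an independent set S of G,
|S|² ≤ (xᵀ M# x) · Σ_{u∈S} M_{uu}/x_u². Here X is the group inverse of M. -/
theorem stmt3 (n : ℕ) (G : SimpleGraph (Fin n)) (M : Matrix (Fin n) (Fin n) ℝ)
    (hM : M.PosSemidef) (x : Fin n → ℝ)
    (hxR : ∃ y : Fin n → ℝ, M.mulVec y = x) (hx : ∀ u, x u ≠ 0)
    (hnonadj : ∀ i j, i ≠ j → ¬ G.Adj i j → M i j * x i * x j ≤ 0)
    (X : Matrix (Fin n) (Fin n) ℝ)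
    (h1 : M * X * M = M) (h2 : X * M * X = X) (h3 : M * X = X * M)
    (S : Finset (Fin n)) (hS : ∀ u ∈ S, ∀ v ∈ S, u ≠ v → ¬ G.Adj u v) :
    (S.card : ℝ) ^ 2 ≤ (x ⬝ᵥ X.mulVec x) * ∑ u ∈ S, M u u / (x u) ^ 2 := by
  obtain ⟨y, hy⟩ := hxR
  have hMsym : Mᵀ = M := hM.1
  have hpsd : ∀ v : Fin n → ℝ, 0 ≤ v ⬝ᵥ M.mulVec v := by
    intro v
    simpa using hM.dotProduct_mulVec_nonneg v
  set z : Fin n → ℝ := fun u => if u ∈ S then 1 / x u else 0 with hz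
  -- z ⬝ᵥ x = card S
  have hzx : z ⬝ᵥ x = (S.card : ℝ) := by
    simp only [dotProduct, hz, ite_mul, one_div, zero_mul]
    rw [Finset.sum_ite_mem, Finset.univ_inter]
    rw [Finset.sum_congr rfl (fun u _ => inv_mul_cancel₀ (hx u))]
    simp
  -- swap lemma specialization
  have hswap := sym_swap hMsym
  -- Cauchy-Schwarz via discriminant
  have hCS : (z ⬝ᵥ M.mulVec y) ^ 2 ≤ (z ⬝ᵥ M.mulVec z) * (y ⬝ᵥ M.mulVec y) := by
    have hq : ∀ t : ℝ, 0 ≤ (y ⬝ᵥ M.mulVec y) * (t * t) + (2 * (z ⬝ᵥ M.mulVec y)) * t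
        + (z ⬝ᵥ M.mulVec z) := by
      intro t
      have h0 := hpsd (z + t • y)
      have hyz : y ⬝ᵥ M.mulVec z = z ⬝ᵥ M.mulVec y := by
        rw [hswap y z, dotProduct_comm]
      calc (0:ℝ) ≤ (z + t • y) ⬝ᵥ M.mulVec (z + t • y) := h0
        _ = (y ⬝ᵥ M.mulVec y) * (t * t) + (2 * (z ⬝ᵥ M.mulVec y)) * t
            + (z ⬝ᵥ M.mulVec z) := by
          simp only [Matrix.mulVec_add, Matrix.mulVec_smul, dotProduct_add,
            add_dotProduct, dotProduct_smul, smul_dotProduct,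
            smul_eq_mul, hyz]
          ring
    have hd := discrim_le_zero hq
    rw [discrim] at hd
    nlinarith [hd]
  -- z^T M z ≤ sum of diagonal terms
  have hzMz : z ⬝ᵥ M.mulVec z = ∑ u ∈ S, ∑ v ∈ S, M u v / (x u * x v) := by
    simp only [dotProduct, Matrix.mulVec, dotProduct, hz, mul_ite, mul_zero, ite_mul,
      zero_mul, Finset.sum_ite_mem, Finset.univ_inter]
    apply Finset.sum_congr rfl
    intro u _
    rw [Finset.mul_sum]
    apply Finset.sum_congr rfl
    intro v _
    simp only [one_div, div_eq_mul_inv, mul_inv]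
    ring
  have hbound : ∑ u ∈ S, ∑ v ∈ S, M u v / (x u * x v) ≤ ∑ u ∈ S, M u u / (x u) ^ 2 := by
    apply Finset.sum_le_sum
    intro u hu
    rw [← Finset.add_sum_erase _ _ hu]
    have hdiag : M u u / (x u * x u) = M u u / (x u) ^ 2 := by rw [sq]
    have hoff : ∑ v ∈ S.erase u, M u v / (x u * x v) ≤ 0 := by
      apply Finset.sum_nonpos
      intro v hv
      have hvS := Finset.mem_of_mem_erase hv
      have hvu : v ≠ u := Finset.ne_of_mem_erase hv
      have hnadj := hS u hu v hvS (Ne.symm hvu)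
      have hle := hnonadj u v (Ne.symm hvu) hnadj
      have hne : x u * x v ≠ 0 := mul_ne_zero (hx u) (hx v)
      have heq : M u v / (x u * x v) = (M u v * x u * x v) / (x u * x v) ^ 2 := by
        rw [sq, mul_assoc, mul_div_mul_right _ _ hne]
      rw [heq]
      exact div_nonpos_of_nonpos_of_nonneg hle (sq_nonneg _)
    linarith
  -- x^T X x = y^T M y
  have hXx : x ⬝ᵥ X.mulVec x = y ⬝ᵥ M.mulVec y := by
    rw [← hy, Matrix.mulVec_mulVec, ← hswap y ((X * M).mulVec y), Matrix.mulVec_mulVec,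
      show M * (X * M) = M from by rw [← Matrix.mul_assoc, h1]]
  have hyMy : 0 ≤ y ⬝ᵥ M.mulVec y := hpsd y
  have hzMy : z ⬝ᵥ M.mulVec y = (S.card : ℝ) := by rw [hy, hzx]
  rw [hXx]
  calc ((S.card : ℝ)) ^ 2 = (z ⬝ᵥ M.mulVec y) ^ 2 := by rw [hzMy]
    _ ≤ (z ⬝ᵥ M.mulVec z) * (y ⬝ᵥ M.mulVec y) := hCS
    _ ≤ (∑ u ∈ S, M u u / (x u) ^ 2) * (y ⬝ᵥ M.mulVec y) := by
        apply mul_le_mul_of_nonneg_right _ hyMy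
        rw [hzMz] at *
        exact hbound
    _ = (y ⬝ᵥ M.mulVec y) * ∑ u ∈ S, M u u / (x u) ^ 2 := mul_comm _ _
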